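/- arXiv:1505.02985 — 2 statements merged into one kernel-verified Lean document; each statement's English description precedes it below -/
import Mathlib

section
/- There is an absolute constant c > 0 such that the following holds. Let d+ > d− > 0 satisfy d+ − d− ≥ c√(d+ ln d+) with d+ bounded below by a sufficiently large absolute constant, let G be a locally finite graph with σ : V(G) → {±1}, let C be the core, and let v be a vertex such that G_v is a finite tree. Then for every w ∈ C_v \ {v} and every t > h_{w→v}: μ_{w→w_{↑v}}(t|G,σ) = μ_{w→w_{↑v}}(h_{w→v}+1|G,σ) = μ_{w→w_{↑v}}(t|G,σ_C), where μ(·|G,σ) denotes Warning Propagation initialized with U = V(G) and μ(·|G,σ_C) with U = C. -/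
open Filter Topology

attribute [local instance] Classical.propDecidable

set_option linter.unusedVariables false

noncomputable section


/-! ### Basic functions -/

/-- The clamping function `ψ` restricted to the integers. -/
def psiZ (x : ℤ) : ℤ := max (-1) (min 1 x)

/-- The threshold function `ψ̃` restricted to the integers. -/
def tpsiZ (x : ℤ) : ℤ := if x ≤ -1 then -1 else 1

/-- `p : ℤ → ℝ` represents a probability measure on `{-1, 0, 1}`. -/
def IsProbOn3 (p : ℤ → ℝ) : Prop :=
  (∀ z, 0 ≤ p z) ∧ (∀ z : ℤ, z ∉ ({-1, 0, 1} : Set ℤ) → p z = 0) ∧ p (-1) + p 0 + p 1 = 1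

/-- `p` is skewed: `p(1) ≥ 1 - d₊⁻¹⁰`. -/
def Skewed (dp : ℝ) (p : ℤ → ℝ) : Prop := 1 - (dp ^ 10)⁻¹ ≤ p 1

/-- The point mass at `1`, i.e. `(0,0,1)`. -/
def delta1 : ℤ → ℝ := fun z => if z = 1 then 1 else 0

/-! ### The operator `T` -/

/-- Convolution of two mass functions on `ℤ`. -/
def convZ (a b : ℤ → ℝ) : ℤ → ℝ := fun z => ∑' w : ℤ, a w * b (z - w)

/-- `n`-fold convolution power (distribution of a sum of `n` i.i.d. copies). -/
def convPow (a : ℤ → ℝ) : ℕ → ℤ → ℝ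
  | 0 => fun z => if z = 0 then 1 else 0
  | n + 1 => convZ (convPow a n) a

/-- Poisson mass function with mean `d`. -/
def poisP (d : ℝ) (k : ℕ) : ℝ := Real.exp (-d) * d ^ k / (Nat.factorial k)

/-- Distribution of `-η` when `η` has distribution `a`. -/
def flipM (a : ℤ → ℝ) : ℤ → ℝ := fun z => a (-z)

/-- The distribution of `Z_p = ∑_{i=1}^{γ₊} η_i - ∑_{i=γ₊+1}^{γ₊+γ₋} η_i` where the `η_i`
are i.i.d. with distribution `p` and `γ₊ ~ Po(d₊)`, `γ₋ ~ Po(d₋)` are independent. -/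
def Zdist (dp dm : ℝ) (p : ℤ → ℝ) : ℤ → ℝ := fun z =>
  ∑' k : ℕ, ∑' l : ℕ, poisP dp k * poisP dm l * convZ (convPow p k) (convPow (flipM p) l) z

/-- The operator `𝒯 = 𝒯_{d₊,d₋}`: the distribution of `ψ(Z_p)`. -/
def Twp (dp dm : ℝ) (p : ℤ → ℝ) : ℤ → ℝ := fun z =>
  if z = 1 then ∑' m : ℕ, Zdist dp dm p (1 + (m : ℤ))
  else if z = 0 then Zdist dp dm p 0
  else if z = -1 then ∑' m : ℕ, Zdist dp dm p (-1 - (m : ℤ))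
  else 0

/-- The value `Z` as a function of the outcomes `η : Fin (k+l) → ℤ`, where the first `k`
coordinates form the `γ₊`-group and the remaining `l` the `γ₋`-group. -/
def zsum (k l : ℕ) (η : Fin (k + l) → ℤ) : ℤ :=
  (∑ j ∈ Finset.univ.filter (fun j : Fin (k + l) => (j : ℕ) < k), η j)
    - ∑ j ∈ Finset.univ.filter (fun j : Fin (k + l) => k ≤ (j : ℕ)), η j

/-- Conditional expectation of
`∑_{i=1}^{γ₊} 1{η_i = -ψ̃(Z)} + ∑_{i=γ₊+1}^{γ₊+γ₋} 1{η_i = ψ̃(Z)}` given `γ₊ = k, γ₋ = l`. -/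
def innerPhi (p : ℤ → ℝ) (k l : ℕ) : ℝ :=
  ∑ η ∈ Fintype.piFinset (fun _ : Fin (k + l) => ({-1, 0, 1} : Finset ℤ)),
    (∏ i, p (η i)) *
      (((Finset.univ.filter (fun i : Fin (k + l) =>
            (i : ℕ) < k ∧ η i = - tpsiZ (zsum k l η))).card : ℝ)
        + ((Finset.univ.filter (fun i : Fin (k + l) =>
            k ≤ (i : ℕ) ∧ η i = tpsiZ (zsum k l η))).card : ℝ))

/-- The functional `φ_{d₊,d₋}`. -/
def phiOp (dp dm : ℝ) (p : ℤ → ℝ) : ℝ :=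
  (1 / 2) * ∑' k : ℕ, ∑' l : ℕ, poisP dp k * poisP dm l * innerPhi p k l

/-! ### The L¹-Wasserstein distance on measures on `{-1,0,1}` -/

/-- `ℓ₁(p,q)`: infimum of `E |X - Y|` over couplings of `p` and `q`. -/
def ell1 (p q : ℤ → ℝ) : ℝ :=
  sInf { r | ∃ ν : ℤ × ℤ → ℝ, (∀ x y, 0 ≤ ν (x, y)) ∧
    (∀ x, ∑ y ∈ ({-1, 0, 1} : Finset ℤ), ν (x, y) = p x) ∧
    (∀ y, ∑ x ∈ ({-1, 0, 1} : Finset ℤ), ν (x, y) = q y) ∧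
    r = ∑ x ∈ ({-1, 0, 1} : Finset ℤ), ∑ y ∈ ({-1, 0, 1} : Finset ℤ),
          |(x : ℝ) - (y : ℝ)| * ν (x, y) }





/-! ### Graphs: restriction, cuts, the core, Warning Propagation -/

/-- Every neighbourhood in a graph on a finite vertex type is finite. -/
noncomputable instance fintypeNeighborSet {V : Type*} [Fintype V] (G : SimpleGraph V) (v : V) :
    Fintype (G.neighborSet v) := Fintype.ofFinite _

/-- The subgraph of `G` consisting of the edges inside `S` (the induced subgraph on `S`,
viewed as a graph on the ambient vertex set; vertices outside `S` are isolated). -/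
def restrictG {V : Type*} (G : SimpleGraph V) (S : Set V) : SimpleGraph V where
  Adj x y := G.Adj x y ∧ x ∈ S ∧ y ∈ S
  symm := ⟨fun x y h => ⟨G.adj_symm h.1, h.2.2, h.2.1⟩⟩
  loopless := ⟨fun x h => G.irrefl h.1⟩

/-- `cut(G, σ)` for the boundary condition `σ` on `U`: the least number of edges of `G` joining
vertices of different colours, over all `±1`-colourings `τ` agreeing with `σ` on `U`.
(The set of ordered pairs of adjacent bichromatic vertices has twice the size of the
corresponding edge set.) -/
def cutW {V : Type*} (G : SimpleGraph V) (U : Set V) (σ : V → ℤ) : ℕ :=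
  sInf { k | ∃ τ : V → ℤ, (∀ x, τ x = 1 ∨ τ x = -1) ∧ (∀ x ∈ U, τ x = σ x) ∧
    2 * k = {p : V × V | G.Adj p.1 p.2 ∧ τ p.1 ≠ τ p.2}.ncard }

/-- The defining property of the core. -/
def CoreProp {V : Type*} (G : SimpleGraph V) (σ : V → ℤ) (dp dm c : ℝ) (U : Set V) : Prop :=
  ∀ u ∈ U,
    |(({w | G.Adj u w ∧ σ u * σ w = 1}.ncard : ℝ) - dp)| ≤ c / 4 * Real.sqrt (dp * Real.log dp) ∧
    |(({w | G.Adj u w ∧ σ u * σ w = -1}.ncard : ℝ) - dm)| ≤ c / 4 * Real.sqrt (dp * Real.log dp) ∧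
    ({w | G.Adj u w} \ U).ncard ≤ 100

/-- The core: the largest subset satisfying `CoreProp`, i.e. the union of all such subsets. -/
def coreSet {V : Type*} (G : SimpleGraph V) (σ : V → ℤ) (dp dm c : ℝ) : Set V :=
  ⋃₀ { U | CoreProp G σ dp dm c U }

/-- The sets `C_v^{(t)}`. -/
def CvStage {V : Type*} (G : SimpleGraph V) (K : Set V) (v : V) : ℕ → Set V
  | 0 => {v} ∪ {w | G.Adj v w}
  | t + 1 => CvStage G K v t ∪ ⋃ u ∈ (CvStage G K v t \ K), {w | G.Adj u w}

/-- The set `C_v = ⋃_t C_v^{(t)}`. -/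
def CvSet {V : Type*} (G : SimpleGraph V) (K : Set V) (v : V) : Set V :=
  ⋃ t, CvStage G K v t

/-- Warning Propagation messages `μ_{v→w}(t | G, σ)` with initial condition `σ` on `U`. -/
def wpMsg {V : Type*} (G : SimpleGraph V) [∀ v : V, Fintype (G.neighborSet v)]
    (U : Set V) (σ : V → ℤ) : ℕ → V → V → ℤ
  | 0, v, _ => if v ∈ U then σ v else 0
  | t + 1, v, w => psiZ (∑ u ∈ (G.neighborFinset v).erase w, wpMsg G U σ t u v)

/-- `μ_v(t|G,σ) = ∑_{w ∈ ∂v} μ_{w→v}(t|G,σ)`. -/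
def wpVal {V : Type*} (G : SimpleGraph V) [∀ v : V, Fintype (G.neighborSet v)]
    (U : Set V) (σ : V → ℤ) (t : ℕ) (v : V) : ℤ :=
  ∑ w ∈ G.neighborFinset v, wpMsg G U σ t w v

/-- The maximum distance from `w` to any vertex reachable from `w` in `G`. -/
def hgt {V : Type*} (G : SimpleGraph V) (w : V) : ℕ :=
  sSup ((G.dist w) '' { u | G.Reachable w u })

/-- `G_v`: the subgraph of `G` induced on `C_v` (ambient form). -/
def GvG {V : Type*} (G : SimpleGraph V) (K : Set V) (v : V) : SimpleGraph V :=
  restrictG G (CvSet G K v)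

/-- `w_{↑v}`: the neighbour of `w` on the path from `w` to `v` in `G_v`. -/
def parentOf {V : Type*} (G : SimpleGraph V) (K : Set V) (v w : V) : V :=
  @Classical.epsilon V ⟨v⟩ fun x =>
    (GvG G K v).Adj w x ∧ (GvG G K v).dist x v + 1 = (GvG G K v).dist w v

/-- `G_v` with the edge `{w, w_{↑v}}` removed. -/
def GdelG {V : Type*} (G : SimpleGraph V) (K : Set V) (v w : V) : SimpleGraph V :=
  (GvG G K v).deleteEdges {s(w, parentOf G K v w)}

/-- `h_{w→v}`: the maximum distance between `w` and any other vertex of `G_{w→v}`. -/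
def hdir {V : Type*} (G : SimpleGraph V) (K : Set V) (v w : V) : ℕ :=
  hgt (GdelG G K v w) w

/-- `C_{w→v}`: the vertex set of the component of `w` in `G_v` minus the edge `{w, w_{↑v}}`. -/
def Cdir {V : Type*} (G : SimpleGraph V) (K : Set V) (v w : V) : Set V :=
  { u | (GdelG G K v w).Reachable w u }

/-- `G_{w→v}`: the component of `w` in `G_v` minus the edge `{w, w_{↑v}}`. -/
def Gdir {V : Type*} (G : SimpleGraph V) (K : Set V) (v w : V) : SimpleGraph V :=
  restrictG (GdelG G K v w) (Cdir G K v w)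

/-- `h_v`: the maximum distance between `v` and any other vertex of `G_v`. -/
def hvG {V : Type*} (G : SimpleGraph V) (K : Set V) (v : V) : ℕ :=
  hgt (GvG G K v) v

/-- `μ*_{w→v} = μ_{w→w_{↑v}}(h_{w→v}+1 | G, σ)`. -/
def muStarDir {V : Type*} (G : SimpleGraph V) [∀ v : V, Fintype (G.neighborSet v)]
    (K : Set V) (σ : V → ℤ) (v w : V) : ℤ :=
  wpMsg G Set.univ σ (hdir G K v w + 1) w (parentOf G K v w)

/-- `μ*_v = μ_v(h_v+1 | G, σ)`. -/
def muStarV {V : Type*} (G : SimpleGraph V) [∀ v : V, Fintype (G.neighborSet v)]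
    (K : Set V) (σ : V → ℤ) (v : V) : ℤ :=
  wpVal G Set.univ σ (hvG G K v + 1) v

/-- The ball of radius `t` around `v` in `G`. -/
def ballSet {V : Type*} (G : SimpleGraph V) (v : V) (t : ℕ) : Set V :=
  { u | G.Reachable v u ∧ G.dist v u ≤ t }

lemma mem_ballSet_self {V : Type*} (G : SimpleGraph V) (v : V) (t : ℕ) : v ∈ ballSet G v t :=
  ⟨SimpleGraph.Reachable.refl v, by simp [SimpleGraph.dist_self]⟩

/-- `∂^t(G,r,σ) ≅ ∂^t(H,r',τ)`: a root- and label-preserving isomorphism between the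
balls of radius `t`. -/
def RootedBallIso {V W : Type*} (G : SimpleGraph V) (σ : V → ℤ) (r : V)
    (H : SimpleGraph W) (τ : W → ℤ) (r' : W) (t : ℕ) : Prop :=
  ∃ φ : (G.induce (ballSet G r t)) ≃g (H.induce (ballSet H r' t)),
    φ ⟨r, mem_ballSet_self G r t⟩ = ⟨r', mem_ballSet_self H r' t⟩ ∧
    ∀ x, τ (φ x).1 = σ x.1





/-! ### The planted bisection model -/

/-- `σ` is a balanced bipartition: the two class sizes differ by at most one. -/
def BalancedPart {n : ℕ} (σ : Fin n → Bool) : Prop :=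
  (((Finset.univ.filter (fun v => σ v = true)).card : ℤ)
    - ((Finset.univ.filter (fun v => σ v = false)).card : ℤ)).natAbs ≤ 1

/-- The number of balanced bipartitions of `Fin n`. -/
def Nbal (n : ℕ) : ℕ := (Finset.univ.filter (fun σ : Fin n → Bool => BalancedPart σ)).card

/-- The probability `p_{σ(v)σ(w)}` of the edge `{v,w}`, where `p₊ = 2d₊/n`, `p₋ = 2d₋/n`. -/
def pairProb (dp dm : ℝ) (n : ℕ) (σ : Fin n → Bool) (v w : Fin n) : ℝ :=
  if σ v = σ w then 2 * dp / n else 2 * dm / n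

/-- The probability mass of an outcome `ω = (σ, g)` of the planted bisection model
`G(n, 2d₊/n, 2d₋/n)`: `σ` is a uniformly random balanced bipartition and, independently
for each pair `v ≠ w`, the edge `{v,w}` is present with probability `p_{σ(v)σ(w)}`. -/
def pbMass (dp dm : ℝ) (n : ℕ) (ω : (Fin n → Bool) × (Fin n → Fin n → Bool)) : ℝ :=
  (if BalancedPart ω.1 ∧ (∀ v w, ω.2 v w = ω.2 w v) ∧ (∀ v, ω.2 v v = false)
    then ((Nbal n : ℝ))⁻¹ else 0) *
  ∏ p ∈ Finset.univ.filter (fun p : Fin n × Fin n => p.1 < p.2),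
    (if ω.2 p.1 p.2 = true then pairProb dp dm n ω.1 p.1 p.2
      else 1 - pairProb dp dm n ω.1 p.1 p.2)

/-- The probability of an event in the planted bisection model. -/
def pbPr (dp dm : ℝ) (n : ℕ) (A : (Fin n → Bool) × (Fin n → Fin n → Bool) → Prop) : ℝ :=
  ∑ ω ∈ Finset.univ.filter A, pbMass dp dm n ω

/-- Sign of a Boolean, as `±1`. -/
def sgnB (b : Bool) : ℤ := if b then 1 else -1

/-- The planted assignment `σ : [n] → {±1}` of an outcome. -/
def pbSigma {n : ℕ} (ω : (Fin n → Bool) × (Fin n → Fin n → Bool)) : Fin n → ℤ :=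
  fun v => sgnB (ω.1 v)

/-- The graph of an outcome. -/
def pbGraph (n : ℕ) (g : Fin n → Fin n → Bool) : SimpleGraph (Fin n) :=
  SimpleGraph.fromRel fun v w => g v w = true

/-- The minimum bisection width `bis(G)`: the least number of edges joining `S` and its
complement over all `S` with `||S| - |S̄|| ≤ 1`. -/
def bisWidth {n : ℕ} (G : SimpleGraph (Fin n)) : ℕ :=
  sInf { k | ∃ S : Finset (Fin n),
    ((S.card : ℤ) - ((n : ℤ) - (S.card : ℤ))).natAbs ≤ 1 ∧
    k = {p : Fin n × Fin n | G.Adj p.1 p.2 ∧ p.1 ∈ S ∧ p.2 ∉ S}.ncard }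

/-! ### Finite rooted typed trees and the two-type Galton–Watson tree -/

/-- Finite rooted trees whose vertices carry a type in `ℤ` (used with types `±1`). -/
inductive GWT : Type
  | node : ℤ → List GWT → GWT

instance : Inhabited GWT := ⟨.node 0 []⟩

/-- The type of the root. -/
def GWT.typeOf : GWT → ℤ
  | .node s _ => s

/-- The subtrees pending on the children of the root. -/
def GWT.childrenOf : GWT → List GWT
  | .node _ l => l

/-- Valid positions (vertices) of a tree, encoded as lists of child indices. -/
def GWT.valid : GWT → List ℕ → Prop
  | _, [] => True
  | T, i :: p => i < T.childrenOf.length ∧ GWT.valid (T.childrenOf.getD i default) p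

/-- The type of the vertex at position `q`. -/
def GWT.typeAt : GWT → List ℕ → ℤ
  | T, [] => T.typeOf
  | T, i :: p => GWT.typeAt (T.childrenOf.getD i default) p

/-- The tree as a simple graph on its set of positions. -/
def GWT.graph (T : GWT) : SimpleGraph { p : List ℕ // T.valid p } where
  Adj a b := (∃ i : ℕ, (b : List ℕ) = (a : List ℕ) ++ [i]) ∨
             (∃ i : ℕ, (a : List ℕ) = (b : List ℕ) ++ [i])
  symm := ⟨fun a b h => h.symm⟩
  loopless := ⟨fun a h => by
    rcases h with ⟨i, hi⟩ | ⟨i, hi⟩ <;>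
      · have := congrArg List.length hi
        simp at this⟩

/-- The root of the tree. -/
def GWT.root (T : GWT) : { p : List ℕ // T.valid p } := ⟨[], trivial⟩

/-- The type labelling of the vertices. -/
def GWT.lab (T : GWT) : { p : List ℕ // T.valid p } → ℤ := fun q => T.typeAt q.1

/-- The Warning Propagation message `μ_{r↑}(t)` sent by the root of a tree towards its
(imaginary) parent, when the messages are initialised with the types. -/
def GWT.rootMsg : ℕ → GWT → ℤ
  | 0, T => T.typeOf
  | t + 1, T => psiZ ((T.childrenOf.map (GWT.rootMsg t)).sum)

/-- The probability mass function of the depth-`t` truncation of the two-type Galton–Watson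
tree with root type `s`, realised as a random *ordered* tree: the root spawns `Po(d₊ + d₋)`
children, each independently of type `s` with probability `d₊/(d₊+d₋)` and of type `-s`
with probability `d₋/(d₊+d₋)`, and the subtrees pending on the children are independent
Galton–Watson trees truncated at depth `t-1`. -/
def ogwMass (dp dm : ℝ) : ℕ → ℤ → GWT → ℝ
  | 0, s, T => if T.typeOf = s ∧ T.childrenOf = [] then 1 else 0
  | t + 1, s, T =>
    if T.typeOf = s then
      Real.exp (-(dp + dm)) / (Nat.factorial T.childrenOf.length) *
        (T.childrenOf.map fun U => (if U.typeOf = s then dp else dm)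
          * ogwMass dp dm t U.typeOf U).prod
    else 0


end

section Aux

variable {V : Type*} {G : SimpleGraph V}

lemma psiZ_le_one (z : ℤ) : psiZ z ≤ 1 := by
  simp [psiZ]

lemma neg_one_le_psiZ (z : ℤ) : -1 ≤ psiZ z := by
  simp [psiZ]

lemma psiZ_eq_one {z : ℤ} (h : 1 ≤ z) : psiZ z = 1 := by
  simp [psiZ, min_eq_left h]

lemma psiZ_eq_neg_one {z : ℤ} (h : z ≤ -1) : psiZ z = -1 := by
  have : min 1 z = z := min_eq_right (by omega)
  simp [psiZ, this, max_eq_left h]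

lemma wpMsg_le_one [∀ v : V, Fintype (G.neighborSet v)] {U : Set V} {σ : V → ℤ}
    (hσ : ∀ x : V, σ x = 1 ∨ σ x = -1) :
    ∀ (t : ℕ) (u x : V), -1 ≤ wpMsg G U σ t u x ∧ wpMsg G U σ t u x ≤ 1 := by
  intro t
  cases t with
  | zero =>
    intro u x
    simp only [wpMsg]
    split
    · rcases hσ u with h | h <;> simp [h]
    · simp
  | succ t =>
    intro u x
    simp only [wpMsg]
    exact ⟨neg_one_le_psiZ _, psiZ_le_one _⟩

/-- The core satisfies its own defining property. -/
lemma coreSet_coreProp (σ : V → ℤ) (dp dm c : ℝ) [∀ v : V, Fintype (G.neighborSet v)] :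
    CoreProp G σ dp dm c (coreSet G σ dp dm c) := by
  intro u hu
  obtain ⟨U0, hU0, huU0⟩ := hu
  obtain ⟨h1, h2, h3⟩ := hU0 u huU0
  refine ⟨h1, h2, ?_⟩
  refine le_trans (Set.ncard_le_ncard ?_ ?_) h3
  · exact Set.diff_subset_diff_right (Set.subset_sUnion_of_mem hU0)
  · exact Set.Finite.subset (Set.toFinite (G.neighborSet u)) (by
      intro z hz; exact hz.1)

/-- Core vertices always send their own colour. -/
lemma core_msg [∀ v : V, Fintype (G.neighborSet v)] {σ : V → ℤ}
    (hσ : ∀ x : V, σ x = 1 ∨ σ x = -1) {dp dm : ℝ}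
    (hdm : 0 < dm) (hdmdp : dm < dp) (hD : (1000000 : ℝ) ≤ dp)
    (hgap : 1 * Real.sqrt (dp * Real.log dp) ≤ dp - dm)
    {K U : Set V} (hK : K = coreSet G σ dp dm 1) (hKU : K ⊆ U) :
    ∀ (t : ℕ) (u x : V), u ∈ K → wpMsg G U σ t u x = σ u := by
  have hsqrt : (404 : ℝ) ≤ Real.sqrt (dp * Real.log dp) := by
    rw [show (404 : ℝ) = Real.sqrt (404 ^ 2) by
      rw [Real.sqrt_sq]; norm_num]
    apply Real.sqrt_le_sqrt
    have hlog : (1 : ℝ) ≤ Real.log dp := by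
      rw [Real.le_log_iff_exp_le (by linarith)]
      calc Real.exp 1 ≤ 2.7182818286 := le_of_lt Real.exp_one_lt_d9
        _ ≤ dp := by linarith
    nlinarith
  intro t
  induction t with
  | zero =>
    intro u x hu
    simp only [wpMsg, if_pos (hKU hu)]
  | succ t ih =>
    intro u x hu
    have hprop := coreSet_coreProp (G := G) σ dp dm 1 u (hK ▸ hu)
    obtain ⟨hp1, hp2, hp3⟩ := hprop
    rw [← hK] at hp3
    simp only [wpMsg]
    set N : Finset V := (G.neighborFinset u).erase x with hN
    set S : ℤ := ∑ y ∈ N, wpMsg G U σ t y u with hS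
    -- the lower bound on σ u * S
    set A : Finset V := N.filter (fun y => y ∈ K ∧ σ y = σ u) with hA
    set B : Finset V := N.filter (fun y => y ∈ K ∧ σ y ≠ σ u) with hB
    set C2 : Finset V := N.filter (fun y => y ∉ K) with hC2
    have huu : σ u * σ u = 1 := by rcases hσ u with h | h <;> simp [h]
    have hterm : ∀ y ∈ N, (if y ∈ K ∧ σ y = σ u then (1 : ℤ) else -1) ≤
        σ u * wpMsg G U σ t y u := by
      intro y hy
      split
      · next h => rw [ih y u h.1, h.2, huu]
      · next h =>
        obtain ⟨hb1, hb2⟩ := wpMsg_le_one hσ (G := G) (U := U) t y u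
        rcases hσ u with h' | h' <;> rw [h'] <;> omega
    set Nc : Finset V := N.filter (fun y => ¬(y ∈ K ∧ σ y = σ u)) with hNc
    have hcardsplit : A.card + Nc.card = N.card := by
      rw [hA, hNc]
      exact Finset.card_filter_add_card_filter_not _
    have hsum : (A.card : ℤ) - (Nc.card : ℤ) ≤ σ u * S := by
      calc (A.card : ℤ) - (Nc.card : ℤ)
          = ∑ y ∈ N, (if y ∈ K ∧ σ y = σ u then (1 : ℤ) else -1) := by
            rw [Finset.sum_ite, Finset.sum_const, Finset.sum_const, ← hA, ← hNc]
            push_cast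
            ring
        _ ≤ ∑ y ∈ N, σ u * wpMsg G U σ t y u := Finset.sum_le_sum hterm
        _ = σ u * S := by rw [hS, Finset.mul_sum]
    -- cardinality estimates
    have hNfin : ∀ y ∈ N, G.Adj u y := by
      intro y hy
      rw [hN] at hy
      exact (G.mem_neighborFinset u y).1 (Finset.mem_of_mem_erase hy)
    have hNsplit : Nc.card ≤ B.card + C2.card := by
      have hsub : Nc ⊆ B ∪ C2 := by
        intro y hy
        rw [hNc, Finset.mem_filter] at hy
        rw [Finset.mem_union, hB, hC2, Finset.mem_filter, Finset.mem_filter]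
        by_cases hyK : y ∈ K
        · exact Or.inl ⟨hy.1, hyK, fun h => hy.2 ⟨hyK, h⟩⟩
        · exact Or.inr ⟨hy.1, hyK⟩
      calc Nc.card ≤ (B ∪ C2).card := Finset.card_le_card hsub
        _ ≤ B.card + C2.card := Finset.card_union_le _ _
    -- relating to the set quantities
    set Sp : Set V := {w | G.Adj u w ∧ σ u * σ w = 1} with hSp
    set Sm : Set V := {w | G.Adj u w ∧ σ u * σ w = -1} with hSm
    have hSpfin : Sp.Finite := Set.Finite.subset (Set.toFinite (G.neighborSet u))
      (fun z hz => hz.1)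
    have hSmfin : Sm.Finite := Set.Finite.subset (Set.toFinite (G.neighborSet u))
      (fun z hz => hz.1)
    have hdiff_fin : ({w | G.Adj u w} \ K).Finite :=
      Set.Finite.subset (Set.toFinite (G.neighborSet u)) (fun z hz => hz.1)
    have hBcard : B.card ≤ Sm.ncard := by
      rw [← Set.ncard_coe_finset]
      apply Set.ncard_le_ncard _ hSmfin
      intro y hy
      simp only [Finset.coe_filter, Set.mem_setOf_eq, hB, Finset.mem_coe] at hy
      obtain ⟨hyN, _, hyne⟩ := hy
      refine ⟨hNfin y hyN, ?_⟩
      rcases hσ u with h | h <;> rcases hσ y with h' | h' <;>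
        simp [h, h'] at hyne ⊢ <;> simp [h, h'] at hyne ⊢ <;> tauto
    have hC2card : C2.card ≤ 100 := by
      have : (C2 : Set V) ⊆ {w | G.Adj u w} \ K := by
        intro y hy
        simp only [Finset.coe_filter, Set.mem_setOf_eq, hC2, Finset.mem_coe] at hy
        exact ⟨hNfin y hy.1, hy.2⟩
      calc C2.card = (C2 : Set V).ncard := (Set.ncard_coe_finset _).symm
        _ ≤ ({w | G.Adj u w} \ K).ncard := Set.ncard_le_ncard this hdiff_fin
        _ ≤ 100 := hp3
    have hAcard : Sp.ncard ≤ A.card + 101 := by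
      have hsub : Sp ⊆ (A : Set V) ∪ ({x} ∪ ({w | G.Adj u w} \ K)) := by
        intro y hy
        obtain ⟨hadj, hprod⟩ := hy
        have hyσ : σ y = σ u := by
          rcases hσ u with h | h <;> rcases hσ y with h' | h' <;>
            simp [h, h'] at hprod ⊢
        by_cases hyK : y ∈ K
        · by_cases hyx : y = x
          · exact Or.inr (Or.inl hyx)
          · refine Or.inl ?_
            simp only [hA, Finset.coe_filter, Set.mem_setOf_eq, Finset.mem_coe]
            exact ⟨Finset.mem_erase.2 ⟨hyx, (G.mem_neighborFinset u y).2 hadj⟩, hyK, hyσ⟩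
        · exact Or.inr (Or.inr ⟨hadj, hyK⟩)
      calc Sp.ncard ≤ ((A : Set V) ∪ ({x} ∪ ({w | G.Adj u w} \ K))).ncard :=
            Set.ncard_le_ncard hsub (Set.Finite.union (Finset.finite_toSet A)
              (Set.Finite.union (Set.finite_singleton x) hdiff_fin))
        _ ≤ (A : Set V).ncard + ({x} ∪ ({w | G.Adj u w} \ K) : Set V).ncard :=
            Set.ncard_union_le _ _
        _ ≤ (A : Set V).ncard + (({x} : Set V).ncard + ({w | G.Adj u w} \ K).ncard) := by
            have := Set.ncard_union_le ({x} : Set V) ({w | G.Adj u w} \ K)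
            omega
        _ ≤ A.card + 101 := by
            rw [Set.ncard_coe_finset, Set.ncard_singleton]
            have := hp3
            omega
    -- real arithmetic
    have habs1 : |((Sp.ncard : ℝ) - dp)| ≤ 1 / 4 * Real.sqrt (dp * Real.log dp) := hp1
    have habs2 : |((Sm.ncard : ℝ) - dm)| ≤ 1 / 4 * Real.sqrt (dp * Real.log dp) := hp2
    rw [abs_le] at habs1 habs2
    have key : (1 : ℝ) ≤ (A.card : ℝ) - (B.card : ℝ) - (C2.card : ℝ) := by
      have e1 : (Sp.ncard : ℝ) ≤ (A.card : ℝ) + 101 := by exact_mod_cast hAcard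
      have e2 : (B.card : ℝ) ≤ (Sm.ncard : ℝ) := by exact_mod_cast hBcard
      have e3 : (C2.card : ℝ) ≤ 100 := by exact_mod_cast hC2card
      nlinarith [habs1.1, habs2.2, hsqrt]
    have hfinal : 1 ≤ σ u * S := by
      have h1 : ((A.card : ℤ) - (B.card : ℤ) - (C2.card : ℤ) : ℤ) ≤
          (A.card : ℤ) - (Nc.card : ℤ) := by
        have := hNsplit
        omega
      have h2 : (1 : ℤ) ≤ (A.card : ℤ) - (B.card : ℤ) - (C2.card : ℤ) := by
        exact_mod_cast (by push_cast; linarith : (1 : ℝ) ≤ ((A.card : ℤ) : ℝ) - (B.card : ℤ) - (C2.card : ℤ))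
      omega
    rcases hσ u with h | h
    · rw [h]; rw [h] at hfinal; exact psiZ_eq_one (by omega)
    · rw [h]; rw [h] at hfinal; exact psiZ_eq_neg_one (by omega)

end Aux

/-! ### Tree machinery -/

section TreeAux

variable {V : Type*} {G : SimpleGraph V} {T : Set V}

lemma mem_of_restrict_walk {x y : V} (p : (restrictG G T).Walk x y) (hx : x ∈ T) : y ∈ T := by
  induction p with
  | nil => exact hx
  | cons h q ih => exact ih h.2.2

lemma mem_of_del_walk {s : Set (Sym2 V)} {x y : V}
    (p : ((restrictG G T).deleteEdges s).Walk x y) (hx : x ∈ T) : y ∈ T := by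
  induction p with
  | nil => exact hx
  | cons h q ih => exact ih ((SimpleGraph.deleteEdges_adj.1 h).1).2.2

/-- The homomorphism from the induced subgraph to the ambient restriction. -/
def downHom (G : SimpleGraph V) (T : Set V) : (G.induce T) →g (restrictG G T) where
  toFun := Subtype.val
  map_rel' := fun {a b} h => ⟨h, a.2, b.2⟩

/-- Lifting a walk of the ambient restriction to the induced subgraph. -/
def liftWalk : ∀ {x y : V} (_ : (restrictG G T).Walk x y) (hx : x ∈ T) (hy : y ∈ T),
    (G.induce T).Walk ⟨x, hx⟩ ⟨y, hy⟩
  | _, _, SimpleGraph.Walk.nil, _, _ => SimpleGraph.Walk.nil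
  | _, _, SimpleGraph.Walk.cons h q, hx, hy =>
      SimpleGraph.Walk.cons (by exact h.1) (liftWalk q h.2.2 hy)

lemma liftWalk_map {x y : V} (p : (restrictG G T).Walk x y) :
    ∀ (hx : x ∈ T) (hy : y ∈ T), (liftWalk p hx hy).map (downHom G T) = p := by
  induction p with
  | nil => intro hx hy; rfl
  | cons h q ih =>
    intro hx hy
    simp only [liftWalk, SimpleGraph.Walk.map_cons]
    exact congrArg (SimpleGraph.Walk.cons h) (ih h.2.2 hy)

lemma lift_isPath {x y : V} (p : (restrictG G T).Walk x y) (hp : p.IsPath)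
    (hx : x ∈ T) (hy : y ∈ T) : (liftWalk p hx hy).IsPath := by
  have hmap := liftWalk_map (G := G) p hx hy
  rw [SimpleGraph.Walk.isPath_def] at hp ⊢
  have hsup := congrArg SimpleGraph.Walk.support hmap
  rw [SimpleGraph.Walk.support_map] at hsup
  replace hp := (congrArg List.Nodup hsup).mpr hp
  exact hp.of_map

lemma restrict_path_unique (htree : (G.induce T).IsTree) {x y : V} (hx : x ∈ T) (hy : y ∈ T)
    (p q : (restrictG G T).Walk x y) (hp : p.IsPath) (hq : q.IsPath) : p = q := by
  have h := htree.existsUnique_path ⟨x, hx⟩ ⟨y, hy⟩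
  have heq := h.unique (lift_isPath p hp hx hy) (lift_isPath q hq hx hy)
  have := congrArg (SimpleGraph.Walk.map (downHom G T)) heq
  rwa [liftWalk_map, liftWalk_map] at this

lemma restrict_reachable (htree : (G.induce T).IsTree) {x y : V} (hx : x ∈ T) (hy : y ∈ T) :
    (restrictG G T).Reachable x y :=
  ((htree.isConnected.preconnected ⟨x, hx⟩ ⟨y, hy⟩).map (downHom G T))

lemma restrict_dist_eq_len (htree : (G.induce T).IsTree) {x y : V} (hx : x ∈ T) (hy : y ∈ T)
    (p : (restrictG G T).Walk x y) (hp : p.IsPath) : p.length = (restrictG G T).dist x y := by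
  obtain ⟨q, hq, hlen⟩ := (restrict_reachable htree hx hy).exists_path_of_dist
  rw [restrict_path_unique htree hx hy p q hp hq, hlen]

lemma dist_le_of_mem_support {G' : SimpleGraph V} {x y z : V} (p : G'.Walk x y)
    (hz : z ∈ p.support) : G'.dist z y ≤ p.length :=
  le_trans (SimpleGraph.dist_le (p.dropUntil z hz)) (SimpleGraph.Walk.length_dropUntil_le p hz)

/-- Distances do not change after deleting edges, within a reachable pair of a tree. -/
lemma dist_del_eq (htree : (G.induce T).IsTree) {s : Set (Sym2 V)} {x z : V} (hx : x ∈ T)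
    (hz : ((restrictG G T).deleteEdges s).Reachable x z) :
    ((restrictG G T).deleteEdges s).dist x z = (restrictG G T).dist x z := by
  have hzT : z ∈ T := by
    obtain ⟨W⟩ := hz
    exact mem_of_del_walk W hx
  apply le_antisymm
  · obtain ⟨W⟩ := hz
    set Q := W.toPath with hQ
    have hQsub : ∀ e ∈ Q.1.edges, e ∈ (restrictG G T).edgeSet := by
      intro e he
      have := Q.1.edges_subset_edgeSet he
      rw [SimpleGraph.edgeSet_deleteEdges] at this
      exact this.1
    set QT := Q.1.transfer (restrictG G T) hQsub with hQT
    have hQTpath : QT.IsPath := by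
      rw [SimpleGraph.Walk.isPath_def, hQT, SimpleGraph.Walk.support_transfer]
      exact Q.2.support_nodup
    calc ((restrictG G T).deleteEdges s).dist x z ≤ Q.1.length := SimpleGraph.dist_le _
      _ = QT.length := (SimpleGraph.Walk.length_transfer _ _).symm
      _ = (restrictG G T).dist x z := restrict_dist_eq_len htree hx hzT QT hQTpath
  · obtain ⟨W, hWlen⟩ := hz.exists_walk_length_eq_dist
    have hWsub : ∀ e ∈ W.edges, e ∈ (restrictG G T).edgeSet := by
      intro e he
      have := W.edges_subset_edgeSet he
      rw [SimpleGraph.edgeSet_deleteEdges] at this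
      exact this.1
    calc (restrictG G T).dist x z ≤ (W.transfer (restrictG G T) hWsub).length :=
          SimpleGraph.dist_le _
      _ = W.length := SimpleGraph.Walk.length_transfer _ _
      _ = _ := hWlen

end TreeAux

section ParentAux

variable {V : Type*} {G : SimpleGraph V} {K : Set V} {v : V}

lemma GvG_eq : GvG G K v = restrictG G (CvSet G K v) := rfl

lemma v_mem_CvSet : v ∈ CvSet G K v := Set.mem_iUnion.2 ⟨0, Or.inl rfl⟩

lemma CvSet_closed {w u : V} (hw : w ∈ CvSet G K v) (hwK : w ∉ K) (hadj : G.Adj w u) :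
    u ∈ CvSet G K v := by
  obtain ⟨t, ht⟩ := Set.mem_iUnion.1 hw
  exact Set.mem_iUnion.2 ⟨t + 1, Or.inr (Set.mem_biUnion ⟨ht, hwK⟩ hadj)⟩

lemma parent_spec (htree : (G.induce (CvSet G K v)).IsTree) {w : V}
    (hw : w ∈ CvSet G K v) (hne : w ≠ v) :
    (GvG G K v).Adj w (parentOf G K v w) ∧
      (GvG G K v).dist (parentOf G K v w) v + 1 = (GvG G K v).dist w v := by
  apply Classical.epsilon_spec
    (p := fun x => (GvG G K v).Adj w x ∧ (GvG G K v).dist x v + 1 = (GvG G K v).dist w v)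
  have hv : v ∈ CvSet G K v := v_mem_CvSet
  have hreach := restrict_reachable htree hw hv
  have hd : 0 < (restrictG G (CvSet G K v)).dist w v := hreach.pos_dist_of_ne hne
  obtain ⟨p, hp, hlen⟩ := hreach.exists_path_of_dist
  cases p with
  | nil => exact absurd rfl hne
  | @cons _ b _ h q =>
    refine ⟨b, h, ?_⟩
    rw [SimpleGraph.Walk.cons_isPath_iff] at hp
    have h1 : (restrictG G (CvSet G K v)).dist b v ≤ q.length := SimpleGraph.dist_le q
    have h2 : (restrictG G (CvSet G K v)).dist w v ≤
        (restrictG G (CvSet G K v)).dist b v + 1 := by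
      obtain ⟨r, hr⟩ := (restrict_reachable htree h.2.2 hv).exists_walk_length_eq_dist
      have := SimpleGraph.dist_le (SimpleGraph.Walk.cons h r)
      rw [SimpleGraph.Walk.length_cons, hr] at this
      omega
    rw [SimpleGraph.Walk.length_cons] at hlen
    show (restrictG G (CvSet G K v)).dist b v + 1 = (restrictG G (CvSet G K v)).dist w v
    omega

lemma parent_unique (htree : (G.induce (CvSet G K v)).IsTree) {w x1 x2 : V}
    (hw : w ∈ CvSet G K v)
    (h1 : (GvG G K v).Adj w x1 ∧ (GvG G K v).dist x1 v + 1 = (GvG G K v).dist w v)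
    (h2 : (GvG G K v).Adj w x2 ∧ (GvG G K v).dist x2 v + 1 = (GvG G K v).dist w v) :
    x1 = x2 := by
  have hv : v ∈ CvSet G K v := v_mem_CvSet
  obtain ⟨P1, hP1, hl1⟩ := (restrict_reachable htree h1.1.2.2 hv).exists_path_of_dist
  obtain ⟨P2, hP2, hl2⟩ := (restrict_reachable htree h2.1.2.2 hv).exists_path_of_dist
  have hw1 : w ∉ P1.support := by
    intro hmem
    have hle := dist_le_of_mem_support P1 hmem
    rw [hl1] at hle
    have := h1.2
    rw [GvG_eq] at this
    omega
  have hw2 : w ∉ P2.support := by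
    intro hmem
    have hle := dist_le_of_mem_support P2 hmem
    rw [hl2] at hle
    have := h2.2
    rw [GvG_eq] at this
    omega
  have hQ1 : (SimpleGraph.Walk.cons h1.1 P1).IsPath :=
    (SimpleGraph.Walk.cons_isPath_iff _ _).2 ⟨hP1, hw1⟩
  have hQ2 : (SimpleGraph.Walk.cons h2.1 P2).IsPath :=
    (SimpleGraph.Walk.cons_isPath_iff _ _).2 ⟨hP2, hw2⟩
  have heq := restrict_path_unique htree hw hv (SimpleGraph.Walk.cons h1.1 P1)
    (SimpleGraph.Walk.cons h2.1 P2) hQ1 hQ2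
  have hsup := congrArg SimpleGraph.Walk.support heq
  change w :: P1.support = w :: P2.support at hsup
  rw [P1.support_eq_cons, P2.support_eq_cons] at hsup
  simp only [List.cons.injEq] at hsup
  exact hsup.2.1

lemma child_spec (htree : (G.induce (CvSet G K v)).IsTree) {w u : V}
    (hw : w ∈ CvSet G K v) (hne : w ≠ v) (hu : (GvG G K v).Adj w u)
    (hup : u ≠ parentOf G K v w) :
    (GvG G K v).dist u v = (GvG G K v).dist w v + 1 ∧ u ≠ v ∧ parentOf G K v u = w := by
  have hv : v ∈ CvSet G K v := v_mem_CvSet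
  replace hu : (restrictG G (CvSet G K v)).Adj w u := hu
  have huT : u ∈ CvSet G K v := hu.2.2
  have hps := parent_spec htree hw hne
  have hkey : (GvG G K v).dist u v = (GvG G K v).dist w v + 1 := by
    obtain ⟨P, hP, hPlen⟩ := (restrict_reachable htree huT hv).exists_path_of_dist
    by_cases hmem : w ∈ P.support
    · have ht1 : (P.takeUntil w hmem).IsPath := hP.takeUntil hmem
      have hsingleP : (SimpleGraph.Walk.cons hu.symm SimpleGraph.Walk.nil :
          (restrictG G (CvSet G K v)).Walk u w).IsPath := by
        simp [SimpleGraph.Walk.cons_isPath_iff, hu.ne']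
      have heq := restrict_path_unique htree huT hu.2.1 (P.takeUntil w hmem)
        (SimpleGraph.Walk.cons hu.symm SimpleGraph.Walk.nil) ht1 hsingleP
      have hlen1 : (P.takeUntil w hmem).length = 1 := by
        rw [heq]; simp
      have hlen2 : (P.takeUntil w hmem).length + (P.dropUntil w hmem).length = P.length := by
        rw [← SimpleGraph.Walk.length_append, P.take_spec hmem]
      have h3 : (restrictG G (CvSet G K v)).dist w v ≤ (P.dropUntil w hmem).length :=
        SimpleGraph.dist_le _
      have h4 : (restrictG G (CvSet G K v)).dist u v ≤
          (restrictG G (CvSet G K v)).dist w v + 1 := by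
        obtain ⟨r, hr⟩ := (restrict_reachable htree hu.2.1 hv).exists_walk_length_eq_dist
        calc (restrictG G (CvSet G K v)).dist u v
            ≤ (SimpleGraph.Walk.cons hu.symm r).length := SimpleGraph.dist_le _
          _ = r.length + 1 := SimpleGraph.Walk.length_cons _ _
          _ = (restrictG G (CvSet G K v)).dist w v + 1 := by rw [hr]
      show (restrictG G (CvSet G K v)).dist u v = (restrictG G (CvSet G K v)).dist w v + 1
      omega
    · exfalso
      have hQ : (SimpleGraph.Walk.cons hu P).IsPath :=
        (SimpleGraph.Walk.cons_isPath_iff _ _).2 ⟨hP, hmem⟩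
      have hlen := restrict_dist_eq_len htree hw hv _ hQ
      rw [SimpleGraph.Walk.length_cons] at hlen
      exact hup (parent_unique htree hw ⟨hu, by rw [GvG_eq]; omega⟩ hps)
  have hunv : u ≠ v := by
    intro h
    rw [h, SimpleGraph.dist_self] at hkey
    omega
  refine ⟨hkey, hunv, ?_⟩
  exact parent_unique htree huT (parent_spec htree huT hunv) ⟨hu.symm, by omega⟩

lemma child_reach (htree : (G.induce (CvSet G K v)).IsTree) {w u : V}
    (hw : w ∈ CvSet G K v) (hne : w ≠ v) (hu : (GvG G K v).Adj w u)
    (hup : u ≠ parentOf G K v w) {z : V}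
    (hz : (GdelG G K v u).Reachable u z) :
    (GdelG G K v w).Reachable w z ∧
      (GvG G K v).dist w z = (GvG G K v).dist u z + 1 := by
  obtain ⟨hdkey, hnev, hpu⟩ := child_spec htree hw hne hu hup
  replace hu : (restrictG G (CvSet G K v)).Adj w u := hu
  have huT : u ∈ CvSet G K v := hu.2.2
  have hzT : z ∈ CvSet G K v := by
    obtain ⟨W⟩ := hz
    exact mem_of_del_walk W huT
  obtain ⟨W⟩ := hz
  set Q := W.toPath with hQdef
  have hQsub : ∀ e ∈ Q.1.edges, e ∈ (restrictG G (CvSet G K v)).edgeSet := by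
    intro e he
    have := Q.1.edges_subset_edgeSet he
    rw [show GdelG G K v u = (GvG G K v).deleteEdges {s(u, parentOf G K v u)} from rfl,
      SimpleGraph.edgeSet_deleteEdges] at this
    exact this.1
  set QT := Q.1.transfer (restrictG G (CvSet G K v)) hQsub with hQTdef
  have hQTpath : QT.IsPath := by
    rw [SimpleGraph.Walk.isPath_def, hQTdef, SimpleGraph.Walk.support_transfer]
    exact Q.2.support_nodup
  have heu : s(u, w) ∉ QT.edges := by
    rw [hQTdef, SimpleGraph.Walk.edges_transfer]
    intro hmem
    have hW := Q.1.edges_subset_edgeSet hmem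
    rw [show GdelG G K v u = (GvG G K v).deleteEdges {s(u, parentOf G K v u)} from rfl,
      SimpleGraph.edgeSet_deleteEdges, hpu] at hW
    exact hW.2 rfl
  have hwsup : w ∉ QT.support := by
    intro hmem
    have ht1 : (QT.takeUntil w hmem).IsPath := hQTpath.takeUntil hmem
    have hsingleP : (SimpleGraph.Walk.cons hu.symm SimpleGraph.Walk.nil :
        (restrictG G (CvSet G K v)).Walk u w).IsPath := by
      simp [SimpleGraph.Walk.cons_isPath_iff, hu.ne']
    have heq := restrict_path_unique htree huT hw (QT.takeUntil w hmem)
      (SimpleGraph.Walk.cons hu.symm SimpleGraph.Walk.nil) ht1 hsingleP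
    have : s(u, w) ∈ (QT.takeUntil w hmem).edges := by
      rw [heq]; simp
    exact heu (QT.edges_takeUntil_subset hmem this)
  have hQC : (SimpleGraph.Walk.cons hu QT).IsPath :=
    (SimpleGraph.Walk.cons_isPath_iff _ _).2 ⟨hQTpath, hwsup⟩
  constructor
  · refine ⟨(SimpleGraph.Walk.cons hu QT).transfer (GdelG G K v w) ?_⟩
    intro e he
    rw [show GdelG G K v w = (GvG G K v).deleteEdges {s(w, parentOf G K v w)} from rfl,
      SimpleGraph.edgeSet_deleteEdges]
    refine ⟨(SimpleGraph.Walk.cons hu QT).edges_subset_edgeSet he, ?_⟩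
    rw [SimpleGraph.Walk.edges_cons, List.mem_cons] at he
    rcases he with he | he
    · rw [he]
      intro hcon
      rw [Set.mem_singleton_iff, Sym2.eq_iff] at hcon
      rcases hcon with ⟨-, h'⟩ | ⟨h', h''⟩
      · exact hup h'
      · exact (GvG G K v).loopless.irrefl w (h'' ▸ hu)
    · intro hcon
      rw [Set.mem_singleton_iff] at hcon
      subst hcon
      exact hwsup (QT.fst_mem_support_of_mem_edges he)
  · have h1 := restrict_dist_eq_len htree hw hzT _ hQC
    have h2 := restrict_dist_eq_len htree huT hzT QT hQTpath
    rw [SimpleGraph.Walk.length_cons] at h1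
    show (restrictG G (CvSet G K v)).dist w z = (restrictG G (CvSet G K v)).dist u z + 1
    omega

lemma hdir_lt (htree : (G.induce (CvSet G K v)).IsTree) (hfin : (CvSet G K v).Finite)
    {w u : V} (hw : w ∈ CvSet G K v) (hne : w ≠ v) (hu : (GvG G K v).Adj w u)
    (hup : u ≠ parentOf G K v w) :
    hdir G K v u + 1 ≤ hdir G K v w := by
  have huT : u ∈ CvSet G K v := hu.2.2
  set Ru : Set V := {z | (GdelG G K v u).Reachable u z} with hRu
  have hRuT : Ru ⊆ CvSet G K v := by
    intro z hzz
    obtain ⟨W⟩ := hzz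
    exact mem_of_del_walk W huT
  have himfin : (((GdelG G K v u).dist u) '' Ru).Finite := (hfin.subset hRuT).image _
  have hne0 : (((GdelG G K v u).dist u) '' Ru).Nonempty :=
    ⟨0, ⟨u, SimpleGraph.Reachable.refl u, SimpleGraph.dist_self⟩⟩
  have hmem := Nat.sSup_mem hne0 himfin.bddAbove
  obtain ⟨z0, hz0R, hz0d⟩ := hmem
  have hcr := child_reach htree hw hne hu hup hz0R
  set Rw : Set V := {z | (GdelG G K v w).Reachable w z} with hRw
  have hRwT : Rw ⊆ CvSet G K v := by
    intro z hzz
    obtain ⟨W⟩ := hzz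
    exact mem_of_del_walk W hw
  have hub : (GdelG G K v w).dist w z0 ≤ hdir G K v w :=
    le_csSup ((hfin.subset hRwT).image _).bddAbove ⟨z0, hcr.1, rfl⟩
  have e1 : (GdelG G K v u).dist u z0 = (GvG G K v).dist u z0 := dist_del_eq htree huT hz0R
  have e2 : (GdelG G K v w).dist w z0 = (GvG G K v).dist w z0 := dist_del_eq htree hw hcr.1
  have : hdir G K v u = (GdelG G K v u).dist u z0 := hz0d.symm
  calc hdir G K v u + 1 = (GdelG G K v u).dist u z0 + 1 := by rw [this]
    _ = (GvG G K v).dist u z0 + 1 := by rw [e1]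
    _ = (GvG G K v).dist w z0 := hcr.2.symm
    _ = (GdelG G K v w).dist w z0 := e2.symm
    _ ≤ hdir G K v w := hub

lemma main_stab [∀ x : V, Fintype (G.neighborSet x)] {σ : V → ℤ}
    (hσ : ∀ x : V, σ x = 1 ∨ σ x = -1) {dp dm : ℝ}
    (hdm : 0 < dm) (hdmdp : dm < dp) (hD : (1000000 : ℝ) ≤ dp)
    (hgap : 1 * Real.sqrt (dp * Real.log dp) ≤ dp - dm)
    (hK : K = coreSet G σ dp dm 1)
    (hfin : (CvSet G K v).Finite) (htree : (G.induce (CvSet G K v)).IsTree) :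
    ∀ (n : ℕ) (w : V), w ∈ CvSet G K v → w ≠ v → hdir G K v w ≤ n →
      ∀ U : Set V, K ⊆ U → ∀ t : ℕ, hdir G K v w < t →
      wpMsg G U σ t w (parentOf G K v w) =
        wpMsg G Set.univ σ (hdir G K v w + 1) w (parentOf G K v w) := by
  intro n
  induction n using Nat.strong_induction_on with
  | _ n ih =>
  intro w hw hne hhn U hU t ht
  by_cases hwK : w ∈ K
  · rw [core_msg hσ hdm hdmdp hD hgap hK hU t w _ hwK,
      core_msg hσ hdm hdmdp hD hgap hK (Set.subset_univ K) _ w _ hwK]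
  · obtain ⟨t', rfl⟩ : ∃ t', t = t' + 1 := ⟨t - 1, by omega⟩
    have hterm : ∀ y ∈ (G.neighborFinset w).erase (parentOf G K v w),
        wpMsg G U σ t' y w = wpMsg G Set.univ σ (hdir G K v w) y w := by
      intro y hy
      have hynep : y ≠ parentOf G K v w := (Finset.mem_erase.1 hy).1
      have hyadj : G.Adj w y := (G.mem_neighborFinset w y).1 (Finset.mem_of_mem_erase hy)
      have hyT : y ∈ CvSet G K v := CvSet_closed hw hwK hyadj
      have hHadj : (GvG G K v).Adj w y := ⟨hyadj, hw, hyT⟩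
      obtain ⟨hdisty, hynev, hypar⟩ := child_spec htree hw hne hHadj hynep
      have hhd : hdir G K v y + 1 ≤ hdir G K v w := hdir_lt htree hfin hw hne hHadj hynep
      have eq1 := ih (hdir G K v y) (by omega) y hyT hynev (le_refl _) U hU t' (by omega)
      have eq2 := ih (hdir G K v y) (by omega) y hyT hynev (le_refl _) Set.univ
        (Set.subset_univ K) (hdir G K v w) (by omega)
      rw [hypar] at eq1 eq2
      rw [eq1, eq2]
    simp only [wpMsg]
    congr 1
    exact Finset.sum_congr rfl hterm

end ParentAux

/-- Lemma 3.2 (1): for `w ∈ C_v \ {v}` and `t > h_{w→v}`,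
`μ_{w→w_{↑v}}(t|G,σ) = μ_{w→w_{↑v}}(h_{w→v}+1|G,σ) = μ_{w→w_{↑v}}(t|G,σ_C)`. -/
theorem directed_messages_stabilise :
    ∃ c : ℝ, 0 < c ∧ ∃ D : ℝ, ∀ dp dm : ℝ,
    0 < dm → dm < dp → D ≤ dp → c * Real.sqrt (dp * Real.log dp) ≤ dp - dm →
    ∀ (V : Type*) (G : SimpleGraph V) [∀ v : V, Fintype (G.neighborSet v)] (σ : V → ℤ),
    (∀ x : V, σ x = 1 ∨ σ x = -1) →
    ∀ K : Set V, K = coreSet G σ dp dm c →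
    ∀ v : V, (CvSet G K v).Finite → (G.induce (CvSet G K v)).IsTree →
    ∀ w ∈ CvSet G K v, w ≠ v →
    ∀ t : ℕ, hdir G K v w < t →
      wpMsg G Set.univ σ t w (parentOf G K v w) = muStarDir G K σ v w ∧
      wpMsg G K σ t w (parentOf G K v w) = muStarDir G K σ v w := by
  refine ⟨1, one_pos, 1000000, ?_⟩
  intro dp dm hdm hdmdp hD hgap V G inst σ hσ K hK v hfin htree w hw hne t ht
  constructor
  · exact main_stab hσ hdm hdmdp hD hgap hK hfin htree (hdir G K v w) w hw hne (le_refl _)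
      Set.univ (Set.subset_univ K) t ht
  · exact main_stab hσ hdm hdmdp hD hgap hK hfin htree (hdir G K v w) w hw hne (le_refl _)
      K (le_refl K) t ht
end

section
/- There is an absolute constant c > 0 such that the following holds. Let d+ > d− > 0 satisfy d+ − d− ≥ c√(d+ ln d+) with d+ bounded below by a sufficiently large absolute constant, let G be a locally finite graph with σ : V(G) → {±1}, let C be the core, and let v be a vertex such that G_v is a finite tree. Then for every t ≥ h_v: μ_v(t|G,σ) = μ_v(h_v+1|G,σ) = μ_v(t|G,σ_C), where μ(·|G,σ) denotes Warning Propagation initialized with U = V(G) and μ(·|G,σ_C) with U = C. -/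
open Filter Topology

attribute [local instance] Classical.propDecidable

set_option linter.unusedVariables false

/-! ### Auxiliary lemmas for the proof -/

open SimpleGraph

section AuxWP

variable {V : Type*}

lemma psiZ_abs_le (x : ℤ) : |psiZ x| ≤ 1 := by
  rw [abs_le]
  unfold psiZ
  refine ⟨le_max_left _ _, max_le (by norm_num) (min_le_left _ _)⟩

lemma wpMsg_succ (G : SimpleGraph V) [∀ v : V, Fintype (G.neighborSet v)]
    (U : Set V) (σ : V → ℤ) (t : ℕ) (v w : V) :
    wpMsg G U σ (t + 1) v w
      = psiZ (∑ u ∈ (G.neighborFinset v).erase w, wpMsg G U σ t u v) := rfl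

lemma wpMsg_abs_le (G : SimpleGraph V) [∀ v : V, Fintype (G.neighborSet v)]
    (U : Set V) (σ : V → ℤ) (hσ : ∀ x, σ x = 1 ∨ σ x = -1) :
    ∀ (t : ℕ) (u w : V), |wpMsg G U σ t u w| ≤ 1 := by
  intro t
  cases t with
  | zero =>
    intro u w
    show |if u ∈ U then σ u else 0| ≤ 1
    split
    · rcases hσ u with h | h <;> simp [h]
    · simp
  | succ t => intro u w; exact psiZ_abs_le _

/-- Frozen messages from core vertices. -/
lemma core_freeze (G : SimpleGraph V) [∀ v : V, Fintype (G.neighborSet v)]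
    (σ : V → ℤ) (hσ : ∀ x, σ x = 1 ∨ σ x = -1)
    {dp dm : ℝ} (hdm : 0 < dm) (hdd : dm < dp) (hD : (10:ℝ)^6 ≤ dp)
    (hgap : Real.sqrt (dp * Real.log dp) ≤ dp - dm)
    (U : Set V) (hU : U = Set.univ ∨ U = coreSet G σ dp dm 1) :
    ∀ (t : ℕ) (u : V), u ∈ coreSet G σ dp dm 1 → ∀ w, wpMsg G U σ t u w = σ u := by
  -- numeric preliminaries
  have hdp0 : (0:ℝ) < dp := by norm_num at hD ⊢; linarith
  have hlog : (1:ℝ) ≤ Real.log dp := by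
    rw [Real.le_log_iff_exp_le hdp0]
    have := Real.exp_one_lt_d9
    norm_num at hD ⊢
    linarith
  have hsq : (406:ℝ) ≤ Real.sqrt (dp * Real.log dp) := by
    have h1 : (406:ℝ) = Real.sqrt (406^2) := by
      rw [Real.sqrt_sq]; norm_num
    rw [h1]
    apply Real.sqrt_le_sqrt
    nlinarith
  intro t
  induction t with
  | zero =>
    intro u hu w
    show (if u ∈ U then σ u else 0) = σ u
    rcases hU with h | h <;> subst h
    · simp
    · simp [hu]
  | succ t ih =>
    intro u hu w
    obtain ⟨U₀, hU₀, huU₀⟩ := hu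
    simp only [Set.mem_setOf_eq] at hU₀
    have hsub : U₀ ⊆ coreSet G σ dp dm 1 := Set.subset_sUnion_of_mem hU₀
    obtain ⟨hc1, hc2, hc3⟩ := hU₀ u huU₀
    set N : Finset V := G.neighborFinset u with hN
    set A : Finset V := N.filter (fun x => σ u * σ x = 1) with hAdef
    set B : Finset V := N.filter (fun x => σ u * σ x = -1) with hBdef
    -- identify the sets in CoreProp with finsets
    have hAset : {w | G.Adj u w ∧ σ u * σ w = 1} = (A : Set V) := by
      ext x
      simp [hAdef, hN, SimpleGraph.mem_neighborFinset]
    have hBset : {w | G.Adj u w ∧ σ u * σ w = -1} = (B : Set V) := by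
      ext x
      simp [hBdef, hN, SimpleGraph.mem_neighborFinset]
    rw [hAset, Set.ncard_coe_finset] at hc1
    rw [hBset, Set.ncard_coe_finset] at hc2
    have hDset : {w | G.Adj u w} \ U₀ = ((N.filter (fun x => x ∉ U₀)) : Set V) := by
      ext x
      simp [hN, SimpleGraph.mem_neighborFinset, Set.mem_diff]
    rw [hDset, Set.ncard_coe_finset] at hc3
    -- counting
    set M : Finset V := N.erase w with hMdef
    set P : Finset V := M.filter (fun x => σ u * σ x = 1 ∧ x ∈ coreSet G σ dp dm 1) with hPdef
    have hPM : P ⊆ M := Finset.filter_subset _ _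
    -- N splits into A and B
    have hABN : A.card + B.card = N.card := by
      have h1 := Finset.card_filter_add_card_filter_not
        (s := N) (p := fun x => σ u * σ x = 1)
      have h2 : N.filter (fun x => ¬ (σ u * σ x = 1)) = B := by
        apply Finset.filter_congr
        intro x _
        rcases hσ u with h | h <;> rcases hσ x with h' | h' <;> simp [h, h']
      rw [h2] at h1
      exact h1
    -- A is nearly contained in P
    have hAP : A.card ≤ P.card + 101 := by
      have hsubA : A ⊆ insert w (P ∪ N.filter (fun x => x ∉ U₀)) := by
        intro x hx
        obtain ⟨hxN, hx1⟩ := Finset.mem_filter.1 hx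
        by_cases hxw : x = w
        · exact Finset.mem_insert.2 (Or.inl hxw)
        · refine Finset.mem_insert.2 (Or.inr (Finset.mem_union.2 ?_))
          by_cases hxc : x ∈ coreSet G σ dp dm 1
          · exact Or.inl (Finset.mem_filter.2 ⟨Finset.mem_erase.2 ⟨hxw, hxN⟩, hx1, hxc⟩)
          · exact Or.inr (Finset.mem_filter.2 ⟨hxN, fun hU₀x => hxc (hsub hU₀x)⟩)
      calc A.card ≤ (insert w (P ∪ N.filter (fun x => x ∉ U₀))).card :=
            Finset.card_le_card hsubA
        _ ≤ (P ∪ N.filter (fun x => x ∉ U₀)).card + 1 := Finset.card_insert_le _ _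
        _ ≤ P.card + (N.filter (fun x => x ∉ U₀)).card + 1 := by
            have := Finset.card_union_le P (N.filter (fun x => x ∉ U₀))
            omega
        _ ≤ P.card + 101 := by omega
    have hMN : M.card ≤ N.card := Finset.card_le_card (Finset.erase_subset _ _)
    -- real inequality : A.card ≥ B.card + 203
    have hAB : B.card + 203 ≤ A.card := by
      have h1 : (A.card : ℝ) - (B.card : ℝ) ≥ 203 := by
        have habs1 := abs_le.1 hc1
        have habs2 := abs_le.1 hc2
        nlinarith [hsq, hgap]
      have : ((B.card : ℝ)) + 203 ≤ (A.card : ℝ) := by linarith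
      exact_mod_cast this
    -- message sum bound
    set mfun : V → ℤ := fun x => wpMsg G U σ t x u with hmdef
    have hPval : ∀ x ∈ P, σ u * mfun x = 1 := by
      intro x hx
      obtain ⟨_, hx1, hxc⟩ := Finset.mem_filter.1 hx
      have : mfun x = σ x := ih x hxc u
      rw [this]; exact hx1
    have hlow : ∀ x ∈ M \ P, (-1 : ℤ) ≤ σ u * mfun x := by
      intro x _
      have h1 : |σ u * mfun x| ≤ 1 := by
        rw [abs_mul]
        have h2 : |σ u| = 1 := by rcases hσ u with h | h <;> simp [h]
        rw [h2, one_mul]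
        exact wpMsg_abs_le G U σ hσ t x u
      exact neg_le_of_abs_le h1
    have hsum : (P.card : ℤ) - ((M \ P).card : ℤ) ≤ σ u * ∑ x ∈ M, mfun x := by
      rw [Finset.mul_sum]
      rw [← Finset.sum_sdiff hPM]
      have h1 : ∑ x ∈ P, σ u * mfun x = (P.card : ℤ) := by
        rw [Finset.sum_congr rfl hPval]
        simp
      have h2 : (-(((M \ P).card : ℤ))) ≤ ∑ x ∈ M \ P, σ u * mfun x := by
        have := Finset.sum_le_sum hlow
        simpa using this
      linarith [h1, h2]
    have hcard : ((M \ P).card : ℤ) = (M.card : ℤ) - (P.card : ℤ) := by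
      have := Finset.card_sdiff_add_card_eq_card hPM
      omega
    have hfinal : (1 : ℤ) ≤ σ u * ∑ x ∈ M, mfun x := by
      have h1 : (1 : ℤ) ≤ (P.card : ℤ) - ((M \ P).card : ℤ) := by
        omega
      exact le_trans h1 hsum
    rw [wpMsg_succ]
    have hgoal : (∑ x ∈ (G.neighborFinset u).erase w, wpMsg G U σ t x u) = ∑ x ∈ M, mfun x := rfl
    rw [hgoal]
    rcases hσ u with h | h <;> rw [h] <;> rw [h] at hfinal <;> unfold psiZ <;> omega

end AuxWP

section TreeAux

variable {V : Type*}

lemma restrict_walk_mem (G : SimpleGraph V) {S : Set V} :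
    ∀ {a b : V}, (restrictG G S).Walk a b → a ∈ S → b ∈ S := by
  intro a b p
  induction p with
  | nil => exact id
  | cons h p ih => intro _; exact ih h.2.2

/-- Inclusion homomorphism from the induced subgraph to the ambient restriction. -/
def homIS (G : SimpleGraph V) (S : Set V) : G.induce S →g restrictG G S where
  toFun := Subtype.val
  map_rel' := fun {a b} h => ⟨h, a.2, b.2⟩

lemma lift_walk (G : SimpleGraph V) {S : Set V} :
    ∀ {a b : V} (p : (restrictG G S).Walk a b) (ha : a ∈ S) (hb : b ∈ S),
    ∃ q : (G.induce S).Walk ⟨a, ha⟩ ⟨b, hb⟩, q.map (homIS G S) = p := by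
  intro a b p
  induction p with
  | nil => intro ha hb; exact ⟨SimpleGraph.Walk.nil, rfl⟩
  | @cons a y b h p ih =>
    intro ha hb
    obtain ⟨q, hq⟩ := ih h.2.2 hb
    refine ⟨SimpleGraph.Walk.cons (by exact h.1 : (G.induce S).Adj ⟨a, ha⟩ ⟨y, h.2.2⟩) q, ?_⟩
    subst hq; rfl

lemma restrict_reachable_s9 (G : SimpleGraph V) {S : Set V} (hT : (G.induce S).IsTree)
    {a b : V} (ha : a ∈ S) (hb : b ∈ S) : (restrictG G S).Reachable a b :=
  (hT.isConnected.preconnected ⟨a, ha⟩ ⟨b, hb⟩).map (homIS G S)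

lemma restrict_path_unique_s9 (G : SimpleGraph V) {S : Set V} (hT : (G.induce S).IsTree)
    {a b : V} (ha : a ∈ S) (hb : b ∈ S) (p q : (restrictG G S).Walk a b)
    (hp : p.IsPath) (hq : q.IsPath) : p = q := by
  obtain ⟨p₀, hp₀⟩ := lift_walk G p ha hb
  obtain ⟨q₀, hq₀⟩ := lift_walk G q ha hb
  have hip : p₀.IsPath := by
    rw [SimpleGraph.Walk.isPath_def]
    have h1 : p.support = p₀.support.map (homIS G S) := by
      rw [← hp₀]; exact SimpleGraph.Walk.support_map _ _
    have h2 := (SimpleGraph.Walk.isPath_def _).1 hp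
    rw [h1] at h2
    exact h2.of_map _
  have hiq : q₀.IsPath := by
    rw [SimpleGraph.Walk.isPath_def]
    have h1 : q.support = q₀.support.map (homIS G S) := by
      rw [← hq₀]; exact SimpleGraph.Walk.support_map _ _
    have h2 := (SimpleGraph.Walk.isPath_def _).1 hq
    rw [h1] at h2
    exact h2.of_map _
  have := ((hT.existsUnique_path ⟨a, ha⟩ ⟨b, hb⟩).unique hip hiq)
  rw [← hp₀, ← hq₀, this]

lemma mem_CvSet_self (G : SimpleGraph V) (K : Set V) (v : V) : v ∈ CvSet G K v :=
  Set.mem_iUnion.2 ⟨0, Or.inl rfl⟩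

lemma adj_mem_CvSet (G : SimpleGraph V) (K : Set V) {v w : V} (h : G.Adj v w) :
    w ∈ CvSet G K v :=
  Set.mem_iUnion.2 ⟨0, Or.inr h⟩

lemma CvSet_closed_s9 (G : SimpleGraph V) (K : Set V) {v u : V}
    (hu : u ∈ CvSet G K v) (hnK : u ∉ K) {x : V} (hx : G.Adj u x) : x ∈ CvSet G K v := by
  obtain ⟨s, hs⟩ := Set.mem_iUnion.1 hu
  refine Set.mem_iUnion.2 ⟨s + 1, Or.inr ?_⟩
  exact Set.mem_biUnion (Set.mem_diff_of_mem hs hnK) hx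

lemma reach_subset_CvSet (G : SimpleGraph V) (K : Set V) (v : V) :
    {u | (GvG G K v).Reachable v u} ⊆ CvSet G K v := by
  intro u hu
  exact hu.elim fun p => restrict_walk_mem G p (mem_CvSet_self G K v)

lemma dist_le_hv (G : SimpleGraph V) (K : Set V) (v : V)
    (hfin : (CvSet G K v).Finite) (hT : (G.induce (CvSet G K v)).IsTree)
    {w : V} (hw : w ∈ CvSet G K v) : (GvG G K v).dist v w ≤ hvG G K v := by
  apply le_csSup
  · exact (((hfin.subset (reach_subset_CvSet G K v)).image _)).bddAbove
  · exact Set.mem_image_of_mem _ (restrict_reachable_s9 G hT (mem_CvSet_self G K v) hw)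

lemma parent_unique_s9 (G : SimpleGraph V) {S : Set V} (hT : (G.induce S).IsTree)
    {v w x u : V} (hvS : v ∈ S) (hwS : w ∈ S) (hxS : x ∈ S) (huS : u ∈ S)
    (hwx : (restrictG G S).Adj w x) (hwu : (restrictG G S).Adj w u)
    (hu : (restrictG G S).dist v u + 1 = (restrictG G S).dist v w)
    (hx : (restrictG G S).dist v x ≤ (restrictG G S).dist v w) : x = u := by
  obtain ⟨p, hp, hpl⟩ := (restrict_reachable_s9 G hT hvS hxS).exists_path_of_dist
  obtain ⟨q, hq, hql⟩ := (restrict_reachable_s9 G hT hvS huS).exists_path_of_dist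
  have hwp : w ∉ p.support := by
    intro hmem
    have h1 : (restrictG G S).dist v w ≤ (p.takeUntil w hmem).length := SimpleGraph.dist_le _
    have h2 : (restrictG G S).dist w x ≤ (p.dropUntil w hmem).length := SimpleGraph.dist_le _
    have h3 : (p.takeUntil w hmem).length + (p.dropUntil w hmem).length = p.length := by
      have h5 := congr_arg SimpleGraph.Walk.length (p.take_spec hmem)
      rw [SimpleGraph.Walk.length_append] at h5
      exact h5
    have h4 : (restrictG G S).dist w x = 0 := by omega
    exact hwx.ne (hwx.reachable.dist_eq_zero_iff.mp h4)
  have hwq : w ∉ q.support := by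
    intro hmem
    have h1 : (restrictG G S).dist v w ≤ (q.takeUntil w hmem).length :=
      SimpleGraph.dist_le _
    have h2 := SimpleGraph.Walk.length_takeUntil_le q hmem
    omega
  have hP1 : (p.concat hwx.symm).IsPath := by
    rw [← SimpleGraph.Walk.isPath_reverse_iff, SimpleGraph.Walk.reverse_concat]
    exact hp.reverse.cons (by simp [SimpleGraph.Walk.support_reverse, hwp])
  have hP2 : (q.concat hwu.symm).IsPath := by
    rw [← SimpleGraph.Walk.isPath_reverse_iff, SimpleGraph.Walk.reverse_concat]
    exact hq.reverse.cons (by simp [SimpleGraph.Walk.support_reverse, hwq])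
  have heq : p.concat hwx.symm = q.concat hwu.symm :=
    restrict_path_unique_s9 G hT hvS hwS _ _ hP1 hP2
  have := congr_arg (fun r : (restrictG G S).Walk v w => r.reverse.getVert 1) heq
  simpa [SimpleGraph.Walk.reverse_concat, SimpleGraph.Walk.getVert_cons_succ] using this

end TreeAux

section MainInd

variable {V : Type*}

lemma stabilise (G : SimpleGraph V) [∀ v : V, Fintype (G.neighborSet v)]
    (σ : V → ℤ) (hσ : ∀ x, σ x = 1 ∨ σ x = -1)
    {dp dm : ℝ} (hdm : 0 < dm) (hdd : dm < dp) (hD : (10:ℝ)^6 ≤ dp)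
    (hgap : Real.sqrt (dp * Real.log dp) ≤ dp - dm)
    (K : Set V) (hK : K = coreSet G σ dp dm 1) (v : V)
    (hfin : (CvSet G K v).Finite) (hT : (G.induce (CvSet G K v)).IsTree) :
    ∀ (m : ℕ) (w u : V), G.Adj w u → w ∈ CvSet G K v → u ∈ CvSet G K v →
    (GvG G K v).dist v u + 1 = (GvG G K v).dist v w →
    hvG G K v + 1 ≤ (GvG G K v).dist v w + m →
    ∀ s t : ℕ, hvG G K v + 1 ≤ (GvG G K v).dist v w + s →
      hvG G K v + 1 ≤ (GvG G K v).dist v w + t →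
      wpMsg G Set.univ σ s w u = wpMsg G Set.univ σ t w u ∧
      wpMsg G K σ s w u = wpMsg G Set.univ σ t w u := by
  intro m
  induction m with
  | zero =>
    intro w u _ hwS _ _ hm _ _ _ _
    have := dist_le_hv G K v hfin hT hwS
    omega
  | succ m ih =>
    intro w u hadj hwS huS hpar hm s t hs ht
    by_cases hwK : w ∈ K
    · rw [hK] at hwK
      have h1 := core_freeze G σ hσ hdm hdd hD hgap Set.univ (Or.inl rfl) s w hwK u
      have h2 := core_freeze G σ hσ hdm hdd hD hgap Set.univ (Or.inl rfl) t w hwK u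
      have h3 := core_freeze G σ hσ hdm hdd hD hgap K (Or.inr hK) s w hwK u
      exact ⟨h1.trans h2.symm, h3.trans h2.symm⟩
    · have hdw : (GvG G K v).dist v w ≤ hvG G K v := dist_le_hv G K v hfin hT hwS
      obtain ⟨s', rfl⟩ : ∃ s', s = s' + 1 := ⟨s - 1, by omega⟩
      obtain ⟨t', rfl⟩ : ∃ t', t = t' + 1 := ⟨t - 1, by omega⟩
      have key : ∀ x ∈ (G.neighborFinset w).erase u,
          wpMsg G Set.univ σ s' x w = wpMsg G Set.univ σ t' x w ∧
          wpMsg G K σ s' x w = wpMsg G Set.univ σ t' x w := by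
        intro x hx
        have hxu : x ≠ u := (Finset.mem_erase.1 hx).1
        have hadjwx : G.Adj w x := by simpa using (Finset.mem_erase.1 hx).2
        have hxS : x ∈ CvSet G K v := CvSet_closed_s9 G K hwS hwK hadjwx
        have hTadj : (GvG G K v).Adj w x := ⟨hadjwx, hwS, hxS⟩
        have hvS : v ∈ CvSet G K v := mem_CvSet_self G K v
        have hd1 : (GvG G K v).dist v x ≤ (GvG G K v).dist v w + 1 := by
          obtain ⟨p, hp, hpl⟩ := (restrict_reachable_s9 G hT hvS hwS).exists_path_of_dist
          have := SimpleGraph.dist_le (p.concat hTadj)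
          exact le_trans this (le_of_eq ((SimpleGraph.Walk.length_concat _ _).trans (congrArg (· + 1) hpl)))
        by_cases hdx : (GvG G K v).dist v x = (GvG G K v).dist v w + 1
        · exact ih x w hadjwx.symm hxS hwS (by omega) (by omega) s' t' (by omega) (by omega)
        · have hTadjwu : (GvG G K v).Adj w u := ⟨hadj, hwS, huS⟩
          have hxle : (GvG G K v).dist v x ≤ (GvG G K v).dist v w := by omega
          exact absurd
            (parent_unique_s9 G hT hvS hwS hxS huS hTadj hTadjwu hpar hxle) hxu
      constructor
      · rw [wpMsg_succ, wpMsg_succ]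
        congr 1
        exact Finset.sum_congr rfl fun x hx => (key x hx).1
      · rw [wpMsg_succ, wpMsg_succ]
        congr 1
        exact Finset.sum_congr rfl fun x hx => (key x hx).2

end MainInd

/-- Lemma 3.2 (2): for all `t ≥ h_v`, `μ_v(t|G,σ) = μ_v(h_v+1|G,σ) = μ_v(t|G,σ_C)`. -/
theorem root_value_stabilises :
    ∃ c : ℝ, 0 < c ∧ ∃ D : ℝ, ∀ dp dm : ℝ,
    0 < dm → dm < dp → D ≤ dp → c * Real.sqrt (dp * Real.log dp) ≤ dp - dm →
    ∀ (V : Type*) (G : SimpleGraph V) [∀ v : V, Fintype (G.neighborSet v)] (σ : V → ℤ),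
    (∀ x : V, σ x = 1 ∨ σ x = -1) →
    ∀ K : Set V, K = coreSet G σ dp dm c →
    ∀ v : V, (CvSet G K v).Finite → (G.induce (CvSet G K v)).IsTree →
    ∀ t : ℕ, hvG G K v ≤ t →
      wpVal G Set.univ σ t v = muStarV G K σ v ∧
      wpVal G K σ t v = muStarV G K σ v := by
  refine ⟨1, one_pos, 10^6, ?_⟩
  intro dp dm hdm hdd hD hgap V G _inst σ hσ K hK v hfin hT t ht
  have hgap' : Real.sqrt (dp * Real.log dp) ≤ dp - dm := by
    rw [one_mul] at hgap; exact hgap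
  have hterm : ∀ w ∈ G.neighborFinset v,
      wpMsg G Set.univ σ t w v = wpMsg G Set.univ σ (hvG G K v + 1) w v ∧
      wpMsg G K σ t w v = wpMsg G Set.univ σ (hvG G K v + 1) w v := by
    intro w hw
    have hadj : G.Adj v w := by simpa using hw
    have hwS : w ∈ CvSet G K v := adj_mem_CvSet G K hadj
    have hvS : v ∈ CvSet G K v := mem_CvSet_self G K v
    have hTadj : (GvG G K v).Adj v w := ⟨hadj, hvS, hwS⟩
    have hd1 : (GvG G K v).dist v w ≤ 1 := by
      have := SimpleGraph.dist_le (SimpleGraph.Walk.cons hTadj SimpleGraph.Walk.nil)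
      simpa using this
    have hd0 : (GvG G K v).dist v w ≠ 0 := fun h =>
      hadj.ne (hTadj.reachable.dist_eq_zero_iff.1 h)
    have hdw : (GvG G K v).dist v w = 1 := by omega
    have hdv : (GvG G K v).dist v v = 0 := SimpleGraph.dist_self
    exact stabilise G σ hσ hdm hdd hD hgap' K hK v hfin hT
      (hvG G K v) w v hadj.symm hwS hvS (by omega) (by omega)
      t (hvG G K v + 1) (by omega) (by omega)
  constructor
  · exact Finset.sum_congr rfl fun w hw => (hterm w hw).1
  · exact Finset.sum_congr rfl fun w hw => (hterm w hw).2
end
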